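/- arXiv:1306.2291 — 2 statements merged into one kernel-verified Lean document; each statement's English description precedes it below -/
import Mathlib

section
/- Let S be a set of ω-sharing groups and let {x₁/t₁} ∪ θ be an idempotent substitution, where θ = {x₂/t₂, …, x_p/t_p}. Then mgu_p(S, {x₁/t₁} ∪ θ) = mgu_p(mgu_p(S, {x₁/t₁}), θ), i.e. parallel abstract unification with the whole substitution coincides with parallel abstract unification with the first binding followed by parallel abstract unification with the remaining bindings. -/
open Classical

/-- First-order terms over a signature `Sig` with arity function `ar`,
    with variables drawn from `ℕ` (a countably infinite set). -/
inductive FTerm (Sig : Type) (ar : Sig → ℕ) : Type where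
  | var : ℕ → FTerm Sig ar
  | app : (f : Sig) → (Fin (ar f) → FTerm Sig ar) → FTerm Sig ar

variable {Sig : Type} {ar : Sig → ℕ}

namespace FTerm

/-- Number of occurrences of the variable `v` in a term. -/
def occ (v : ℕ) : FTerm Sig ar → ℕ
  | var w => if w = v then 1 else 0
  | app _ ts => ∑ i, occ v (ts i)

/-- Application of a substitution (a total map from variables to terms) to a term. -/
def subst (δ : ℕ → FTerm Sig ar) : FTerm Sig ar → FTerm Sig ar
  | var v => δ v
  | app f ts => app f (fun i => (ts i).subst δ)

end FTerm

/-- Domain of a substitution. -/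
def domS (θ : ℕ → FTerm Sig ar) : Set ℕ := {x | θ x ≠ FTerm.var x}

/-- Set of variables occurring in a term. -/
def varsT (t : FTerm Sig ar) : Set ℕ := {v | FTerm.occ v t ≠ 0}

/-- Range of a substitution. -/
def rngS (θ : ℕ → FTerm Sig ar) : Set ℕ := ⋃ x ∈ domS θ, varsT (θ x)

/-- Variables of a substitution. -/
def varsS (θ : ℕ → FTerm Sig ar) : Set ℕ := domS θ ∪ rngS θ

/-- A substitution is idempotent iff its domain and range are disjoint. -/
def Idem (θ : ℕ → FTerm Sig ar) : Prop := domS θ ∩ rngS θ = ∅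

/-- Multiplicity `χ(B,t)` of an ω-sharing group `B` in a term `t`. -/
def chi (B : ℕ →₀ ℕ) (t : FTerm Sig ar) : ℕ := ∑ v ∈ B.support, B v * FTerm.occ v t

/-- A parallel sharing graph for a set `S` of ω-sharing groups and an
    (idempotent) substitution `θ`.  The layers are indexed by the variables in
    the domain of `θ` (the function `layer` assigns to each edge its layer, so
    the edge sets of different layers are automatically pairwise disjoint). -/
structure PSG (Sig : Type) (ar : Sig → ℕ) (S : Set (ℕ →₀ ℕ)) (θ : ℕ → FTerm Sig ar) where
  N : Type
  fintypeN : Fintype N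
  nonemptyN : Nonempty N
  E : Type
  fintypeE : Fintype E
  layer : E → ℕ
  src : E → N
  tgt : E → N
  label : N → (ℕ →₀ ℕ)
  label_mem : ∀ n, label n ∈ S
  layer_mem : ∀ e, layer e ∈ domS θ
  out_deg : ∀ (n : N), ∀ x ∈ domS θ,
    Nat.card {e : E // layer e = x ∧ src e = n} = chi (label n) (FTerm.var x : FTerm Sig ar)
  in_deg : ∀ (n : N), ∀ x ∈ domS θ,
    Nat.card {e : E // layer e = x ∧ tgt e = n} = chi (label n) (θ x)
  conn : ∀ a b : N, Relation.ReflTransGen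
    (fun a b => ∃ e : E, (src e = a ∧ tgt e = b) ∨ (src e = b ∧ tgt e = a)) a b

attribute [instance] PSG.fintypeN PSG.fintypeE PSG.nonemptyN

/-- The resultant ω-sharing group of a parallel sharing graph. -/
noncomputable def PSG.res {S : Set (ℕ →₀ ℕ)} {θ : ℕ → FTerm Sig ar}
    (G : PSG Sig ar S θ) : ℕ →₀ ℕ := ∑ n : G.N, G.label n

/-- Parallel abstract unification. -/
def mguP (S : Set (ℕ →₀ ℕ)) (θ : ℕ → FTerm Sig ar) : Set (ℕ →₀ ℕ) :=
  { B | ∃ G : PSG Sig ar S θ, G.res = B }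

/-- The single-binding substitution `{x/t}`. -/
def sbind (x : ℕ) (t : FTerm Sig ar) : ℕ → FTerm Sig ar :=
  fun v => if v = x then t else FTerm.var v

-- preliminaries
attribute [local instance] Classical.propDecidable

lemma chi_eq_finsuppSum (B : ℕ →₀ ℕ) (t : FTerm Sig ar) :
    chi B t = B.sum (fun v k => k * FTerm.occ v t) := rfl

lemma chi_var (B : ℕ →₀ ℕ) (x : ℕ) : chi B (FTerm.var x : FTerm Sig ar) = B x := by
  classical
  unfold chi
  rw [Finset.sum_eq_single x]
  · simp [FTerm.occ]
  · intro v _ hv; simp [FTerm.occ, Ne.symm hv]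
  · intro hx; simp [Finsupp.notMem_support_iff.mp hx]

lemma chi_finsetSum {ι : Type*} (s : Finset ι) (f : ι → (ℕ →₀ ℕ)) (t : FTerm Sig ar) :
    chi (∑ i ∈ s, f i) t = ∑ i ∈ s, chi (f i) t := by
  simp only [chi_eq_finsuppSum]
  exact (Finsupp.sum_finset_sum_index (h := fun v k => k * FTerm.occ v t)
    (fun v => zero_mul _) (fun v k k' => add_mul k k' _)).symm

lemma domS_sbind {x₁ : ℕ} {t₁ : FTerm Sig ar} (ht₁ : t₁ ≠ FTerm.var x₁) :
    domS (sbind x₁ t₁) = {x₁} := by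
  ext v
  simp only [domS, sbind, Set.mem_setOf_eq, Set.mem_singleton_iff]
  by_cases h : v = x₁ <;> simp [h, ht₁]

lemma exists_fiber_card {A M : Type} [Finite A] [Fintype M] (c : M → ℕ)
    (h : Nat.card A = ∑ m, c m) : ∃ g : A → M, ∀ m, Nat.card {a : A // g a = m} = c m := by
  classical
  have := Fintype.ofFinite A
  have hcard : Fintype.card A = Fintype.card (Σ m : M, Fin (c m)) := by
    rw [Fintype.card_sigma]
    simpa [Nat.card_eq_fintype_card] using h
  obtain e := Fintype.equivOfCardEq hcard
  refine ⟨fun a => (e a).1, fun m => ?_⟩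
  have e2 : {a : A // (e a).1 = m} ≃ {s : Σ m' : M, Fin (c m') // s.1 = m} :=
    e.subtypeEquiv (fun a => Iff.rfl)
  have e3 : Fin (c m) ≃ {s : Σ m' : M, Fin (c m') // s.1 = m} := by
    refine Equiv.ofBijective (fun k => ⟨⟨m, k⟩, rfl⟩) ⟨?_, ?_⟩
    · intro k k' h
      have h2 : (⟨m, k⟩ : Σ m' : M, Fin (c m')) = ⟨m, k'⟩ := congrArg Subtype.val h
      exact eq_of_heq (Sigma.mk.inj_iff.mp h2).2
    · rintro ⟨⟨m', k⟩, h⟩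
      dsimp at h; subst h
      exact ⟨k, rfl⟩
  rw [Nat.card_congr (e2.trans e3.symm)]
  simp

noncomputable def pickAssign {A M : Type} [Finite A] [Fintype M] [Nonempty M] (c : M → ℕ) :
    A → M :=
  if h : Nat.card A = ∑ m, c m then (exists_fiber_card c h).choose
  else fun _ => Classical.arbitrary M

lemma pickAssign_spec {A M : Type} [Finite A] [Fintype M] [Nonempty M] (c : M → ℕ)
    (h : Nat.card A = ∑ m, c m) (m : M) : Nat.card {a : A // pickAssign c a = m} = c m := by
  simp only [pickAssign, dif_pos h]
  exact (exists_fiber_card c h).choose_spec m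

lemma natCard_subtype_eq {α β : Type} (p : α → Prop) (q : β → Prop) (f : α → β)
    (hf : ∀ a, p a → q (f a)) (hinj : ∀ a a', p a → p a' → f a = f a' → a = a')
    (hsurj : ∀ b, q b → ∃ a, p a ∧ f a = b) :
    Nat.card {a // p a} = Nat.card {b // q b} :=
  Nat.card_congr (Equiv.ofBijective (fun a => ⟨f a.1, hf a.1 a.2⟩)
    ⟨fun a a' h => Subtype.ext (hinj _ _ a.2 a'.2 (congrArg Subtype.val h)),
     fun b => by obtain ⟨a, ha, hfa⟩ := hsurj b.1 b.2; exact ⟨⟨a, ha⟩, Subtype.ext hfa⟩⟩)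

lemma card_partition {E N : Type} [Fintype E] [Fintype N] (p : E → Prop) (f : E → N)
    (q : N → Prop) :
    Nat.card {e : E // p e ∧ q (f e)} =
      ∑ n ∈ Finset.univ.filter q, Nat.card {e : E // p e ∧ f e = n} := by
  classical
  simp only [Nat.card_eq_fintype_card, Fintype.card_subtype]
  have h2 : Finset.filter (fun e => p e ∧ q (f e)) Finset.univ
      = Finset.filter (fun e => f e ∈ Finset.univ.filter q) (Finset.filter p Finset.univ) := by
    rw [Finset.filter_filter]
    apply Finset.filter_congr
    intro e _
    simp
  rw [h2, ← Finset.sum_card_fiberwise_eq_card_filter]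
  refine Finset.sum_congr rfl (fun n _ => ?_)
  rw [Finset.filter_filter]

lemma rtg_symm {α : Type*} {r : α → α → Prop} (hs : ∀ a b, r a b → r b a) {a b : α}
    (h : Relation.ReflTransGen r a b) : Relation.ReflTransGen r b a := by
  induction h with
  | refl => exact .refl
  | tail _ hbc ih => exact Relation.ReflTransGen.head (hs _ _ hbc) ih

lemma rtg_of_eqvGen {α : Type*} {r : α → α → Prop} (hs : ∀ a b, r a b → r b a) {a b : α}
    (h : Relation.EqvGen r a b) : Relation.ReflTransGen r a b := by
  induction h with
  | rel a b h => exact .single h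
  | refl a => exact .refl
  | symm a b _ ih => exact rtg_symm hs ih
  | trans a b c _ _ ih1 ih2 => exact ih1.trans ih2

section Dir1
variable {x₁ : ℕ} {t₁ : FTerm Sig ar} {θ : ℕ → FTerm Sig ar}

lemma domS_eta_mem₁ (ht₁ : t₁ ≠ FTerm.var x₁) :
    x₁ ∈ domS (fun v => if v = x₁ then t₁ else θ v) := by
  simp [domS, ht₁]

lemma domS_theta_subset (hx₁ : θ x₁ = FTerm.var x₁) :
    ∀ x ∈ domS θ, x ∈ domS (fun v => if v = x₁ then t₁ else θ v) ∧ x ≠ x₁ := by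
  intro x hx
  have hne : x ≠ x₁ := by rintro rfl; exact hx hx₁
  exact ⟨by simpa [domS, hne] using hx, hne⟩

lemma x₁_not_domS (hx₁ : θ x₁ = FTerm.var x₁) : x₁ ∉ domS θ := fun h => h hx₁

lemma domS_eta_cases {x : ℕ} (hx : x ∈ domS (fun v => if v = x₁ then t₁ else θ v))
    (hne : x ≠ x₁) : x ∈ domS θ := by
  simpa [domS, hne] using hx

lemma dir1 (S : Set (ℕ →₀ ℕ)) (ht₁ : t₁ ≠ FTerm.var x₁) (hx₁ : θ x₁ = FTerm.var x₁) :
    mguP S (fun v => if v = x₁ then t₁ else θ v) ⊆ mguP (mguP S (sbind x₁ t₁)) θ := by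
  set η : ℕ → FTerm Sig ar := fun v => if v = x₁ then t₁ else θ v with hη
  rintro B ⟨G, rfl⟩
  set r₁ : G.N → G.N → Prop := fun a b => ∃ e : G.E, G.layer e = x₁ ∧
    ((G.src e = a ∧ G.tgt e = b) ∨ (G.src e = b ∧ G.tgt e = a)) with hr₁
  have hr₁symm : ∀ a b, r₁ a b → r₁ b a := by
    rintro a b ⟨e, he, h | h⟩
    exacts [⟨e, he, Or.inr h⟩, ⟨e, he, Or.inl h⟩]
  set s : Setoid G.N := Relation.EqvGen.setoid r₁ with hs
  letI : DecidableRel ((· ≈ ·) : G.N → G.N → Prop) := fun a b => Classical.propDecidable _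
  have hclose : ∀ e : G.E, G.layer e = x₁ →
      Quotient.mk s (G.src e) = Quotient.mk s (G.tgt e) :=
    fun e he => Quotient.sound (Relation.EqvGen.rel _ _ ⟨e, he, Or.inl ⟨rfl, rfl⟩⟩)
  set Hlabel : Quotient s → (ℕ →₀ ℕ) :=
    fun c => ∑ n ∈ Finset.univ.filter (fun n => Quotient.mk s n = c), G.label n with hHlabel
  have hx₁η : x₁ ∈ domS η := domS_eta_mem₁ ht₁
  have hx₁t : η x₁ = t₁ := if_pos rfl
  have hcomp : ∀ c : Quotient s, Hlabel c ∈ mguP S (sbind x₁ t₁) := by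
    intro c
    obtain ⟨n₀, hn₀⟩ := Quotient.exists_rep c
    refine ⟨{
      N := {n : G.N // Quotient.mk s n = c}
      fintypeN := inferInstance
      nonemptyN := ⟨⟨n₀, hn₀⟩⟩
      E := {e : G.E // G.layer e = x₁ ∧ Quotient.mk s (G.src e) = c}
      fintypeE := inferInstance
      layer := fun _ => x₁
      src := fun e => ⟨G.src e.1, e.2.2⟩
      tgt := fun e => ⟨G.tgt e.1, by rw [← hclose e.1 e.2.1]; exact e.2.2⟩
      label := fun n => G.label n.1
      label_mem := fun n => G.label_mem n.1
      layer_mem := fun _ => by rw [domS_sbind ht₁]; rfl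
      out_deg := ?_
      in_deg := ?_
      conn := ?_ }, ?_⟩
    · rintro ⟨n, hn⟩ x hx
      rw [domS_sbind ht₁] at hx
      rw [show x = x₁ from hx]
      rw [← G.out_deg n x₁ hx₁η]
      refine natCard_subtype_eq _ _ (fun e => e.1) ?_ ?_ ?_
      · rintro ⟨e, he, hc⟩ ⟨-, hsrc⟩
        exact ⟨he, congrArg Subtype.val hsrc⟩
      · intro a a' _ _ h; exact Subtype.ext h
      · rintro e ⟨he, hsrc⟩
        exact ⟨⟨e, he, by rw [hsrc]; exact hn⟩, ⟨rfl, Subtype.ext hsrc⟩, rfl⟩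
    · rintro ⟨n, hn⟩ x hx
      rw [domS_sbind ht₁] at hx
      rw [show x = x₁ from hx]
      rw [show sbind x₁ t₁ x₁ = t₁ from if_pos rfl, ← hx₁t, ← G.in_deg n x₁ hx₁η]
      refine natCard_subtype_eq _ _ (fun e => e.1) ?_ ?_ ?_
      · rintro ⟨e, he, hc⟩ ⟨-, htgt⟩
        exact ⟨he, congrArg Subtype.val htgt⟩
      · intro a a' _ _ h; exact Subtype.ext h
      · rintro e ⟨he, htgt⟩
        refine ⟨⟨e, he, ?_⟩, ⟨rfl, Subtype.ext htgt⟩, rfl⟩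
        rw [hclose e he, htgt]; exact hn
    · rintro ⟨a, ha⟩ ⟨b, hb⟩
      have hab : Relation.ReflTransGen r₁ a b :=
        rtg_of_eqvGen hr₁symm (Quotient.exact (ha.trans hb.symm))
      induction hab with
      | refl => exact Relation.ReflTransGen.refl
      | @tail b' b hab' step ih =>
          obtain ⟨e, he, hor⟩ := step
          have hb' : Quotient.mk s b' = c := by
            rcases hor with ⟨h1, h2⟩ | ⟨h1, h2⟩
            · rw [← h1, hclose e he, h2]; exact hb
            · rw [← h2, ← hclose e he, h1]; exact hb
          refine Relation.ReflTransGen.tail (ih hb') ?_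
          refine ⟨⟨e, he, ?_⟩, ?_⟩
          · rcases hor with ⟨h1, h2⟩ | ⟨h1, h2⟩
            · rw [h1]; exact hb'
            · rw [h1]; exact hb
          · rcases hor with ⟨h1, h2⟩ | ⟨h1, h2⟩
            · exact Or.inl ⟨Subtype.ext h1, Subtype.ext h2⟩
            · exact Or.inr ⟨Subtype.ext h1, Subtype.ext h2⟩
    · show (∑ n : {n : G.N // Quotient.mk s n = c}, G.label n.1) = Hlabel c
      rw [hHlabel]
      exact (Finset.sum_subtype _ (by simp) (fun n => G.label n)).symm
  refine ⟨{
    N := Quotient s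
    fintypeN := inferInstance
    nonemptyN := ⟨Quotient.mk s (Classical.arbitrary G.N)⟩
    E := {e : G.E // G.layer e ≠ x₁}
    fintypeE := inferInstance
    layer := fun e => G.layer e.1
    src := fun e => Quotient.mk s (G.src e.1)
    tgt := fun e => Quotient.mk s (G.tgt e.1)
    label := Hlabel
    label_mem := hcomp
    layer_mem := ?_
    out_deg := ?_
    in_deg := ?_
    conn := ?_ }, ?_⟩
  · rintro ⟨e, he⟩
    exact domS_eta_cases (G.layer_mem e) he
  · intro c x hx
    obtain ⟨hxη, hxne⟩ := domS_theta_subset hx₁ x hx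
    have step1 : Nat.card {e' : {e : G.E // G.layer e ≠ x₁} //
        G.layer e'.1 = x ∧ Quotient.mk s (G.src e'.1) = c}
        = Nat.card {e : G.E // G.layer e = x ∧ Quotient.mk s (G.src e) = c} := by
      refine natCard_subtype_eq _ _ (fun e => e.1) (fun a h => h) ?_ ?_
      · intro a a' _ _ h; exact Subtype.ext h
      · rintro e ⟨hl, hc⟩
        exact ⟨⟨e, by rw [hl]; exact hxne⟩, ⟨hl, hc⟩, rfl⟩
    show Nat.card {e' : {e : G.E // G.layer e ≠ x₁} //
        G.layer e'.1 = x ∧ Quotient.mk s (G.src e'.1) = c} = chi (Hlabel c) (FTerm.var x)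
    rw [step1, card_partition (fun e => G.layer e = x) G.src (fun n => Quotient.mk s n = c)]
    have : ∀ n ∈ Finset.univ.filter (fun n => Quotient.mk s n = c),
        Nat.card {e : G.E // G.layer e = x ∧ G.src e = n} = G.label n x := by
      intro n _
      rw [G.out_deg n x hxη, chi_var]
    simp only [hHlabel]
    rw [chi_var, Finsupp.finset_sum_apply]
    exact Finset.sum_congr (by congr!) this
  · intro c x hx
    obtain ⟨hxη, hxne⟩ := domS_theta_subset hx₁ x hx
    have hηx : η x = θ x := if_neg hxne
    have step1 : Nat.card {e' : {e : G.E // G.layer e ≠ x₁} //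
        G.layer e'.1 = x ∧ Quotient.mk s (G.tgt e'.1) = c}
        = Nat.card {e : G.E // G.layer e = x ∧ Quotient.mk s (G.tgt e) = c} := by
      refine natCard_subtype_eq _ _ (fun e => e.1) (fun a h => h) ?_ ?_
      · intro a a' _ _ h; exact Subtype.ext h
      · rintro e ⟨hl, hc⟩
        exact ⟨⟨e, by rw [hl]; exact hxne⟩, ⟨hl, hc⟩, rfl⟩
    show Nat.card {e' : {e : G.E // G.layer e ≠ x₁} //
        G.layer e'.1 = x ∧ Quotient.mk s (G.tgt e'.1) = c} = chi (Hlabel c) (θ x)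
    rw [step1, card_partition (fun e => G.layer e = x) G.tgt (fun n => Quotient.mk s n = c)]
    have : ∀ n ∈ Finset.univ.filter (fun n => Quotient.mk s n = c),
        Nat.card {e : G.E // G.layer e = x ∧ G.tgt e = n} = chi (G.label n) (θ x) := by
      intro n _
      rw [G.in_deg n x hxη, hηx]
    simp only [hHlabel]
    rw [chi_finsetSum]
    exact Finset.sum_congr (by congr!) this
  · have lift : ∀ a b : G.N, Relation.ReflTransGen
        (fun a b => ∃ e : G.E, (G.src e = a ∧ G.tgt e = b) ∨ (G.src e = b ∧ G.tgt e = a)) a b →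
        Relation.ReflTransGen
          (fun a b => ∃ e' : {e : G.E // G.layer e ≠ x₁},
            (Quotient.mk s (G.src e'.1) = a ∧ Quotient.mk s (G.tgt e'.1) = b) ∨
            (Quotient.mk s (G.src e'.1) = b ∧ Quotient.mk s (G.tgt e'.1) = a))
          (Quotient.mk s a) (Quotient.mk s b) := by
      intro a b h
      induction h with
      | refl => exact Relation.ReflTransGen.refl
      | @tail b' b hab' step ih =>
          obtain ⟨e, hor⟩ := step
          by_cases hl : G.layer e = x₁
          · have : Quotient.mk s b' = Quotient.mk s b := by
              rcases hor with ⟨h1, h2⟩ | ⟨h1, h2⟩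
              · rw [← h1, ← h2]; exact hclose e hl
              · rw [← h1, ← h2]; exact (hclose e hl).symm
            rw [← this]; exact ih
          · refine Relation.ReflTransGen.tail ih ⟨⟨e, hl⟩, ?_⟩
            rcases hor with ⟨h1, h2⟩ | ⟨h1, h2⟩
            · exact Or.inl ⟨by rw [h1], by rw [h2]⟩
            · exact Or.inr ⟨by rw [h1], by rw [h2]⟩
    intro cₐ c_b
    obtain ⟨a, rfl⟩ := Quotient.exists_rep cₐ
    obtain ⟨b, rfl⟩ := Quotient.exists_rep c_b
    exact lift a b (G.conn a b)
  · show (∑ c : Quotient s, Hlabel c) = G.res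
    rw [hHlabel, PSG.res]
    exact Finset.sum_fiberwise Finset.univ (fun n => Quotient.mk s n) (fun n => G.label n)

lemma dir2 (S : Set (ℕ →₀ ℕ)) (ht₁ : t₁ ≠ FTerm.var x₁) (hx₁ : θ x₁ = FTerm.var x₁) :
    mguP (mguP S (sbind x₁ t₁)) θ ⊆ mguP S (fun v => if v = x₁ then t₁ else θ v) := by
  set η : ℕ → FTerm Sig ar := fun v => if v = x₁ then t₁ else θ v with hη
  rintro B ⟨H, rfl⟩
  have hx₁η : x₁ ∈ domS η := domS_eta_mem₁ ht₁
  have hx₁s : x₁ ∈ domS (sbind x₁ t₁) := by rw [domS_sbind ht₁]; rfl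
  have hx₁θ : x₁ ∉ domS θ := x₁_not_domS hx₁
  choose Gs hGs using fun n => H.label_mem n
  have hKlayer : ∀ (n : H.N) (e : (Gs n).E), (Gs n).layer e = x₁ := by
    intro n e
    have h := (Gs n).layer_mem e
    rw [domS_sbind ht₁] at h
    exact h
  set G1 : ∀ (n : H.N) (x : ℕ), {e : H.E // H.layer e = x ∧ H.src e = n} → (Gs n).N :=
    fun n x => pickAssign (fun m => (Gs n).label m x) with hG1def
  set G2 : ∀ (n : H.N) (x : ℕ), {e : H.E // H.layer e = x ∧ H.tgt e = n} → (Gs n).N :=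
    fun n x => pickAssign (fun m => chi ((Gs n).label m) (θ x)) with hG2def
  have hG1 : ∀ (n : H.N) (x : ℕ), x ∈ domS θ → ∀ m : (Gs n).N,
      Nat.card {a : {e : H.E // H.layer e = x ∧ H.src e = n} // G1 n x a = m}
        = (Gs n).label m x := by
    intro n x hx m
    refine pickAssign_spec _ ?_ m
    rw [H.out_deg n x hx, chi_var, ← hGs n]
    show ((Gs n).res) x = _
    rw [PSG.res, Finsupp.finset_sum_apply]
  have hG2 : ∀ (n : H.N) (x : ℕ), x ∈ domS θ → ∀ m : (Gs n).N,
      Nat.card {a : {e : H.E // H.layer e = x ∧ H.tgt e = n} // G2 n x a = m}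
        = chi ((Gs n).label m) (θ x) := by
    intro n x hx m
    refine pickAssign_spec _ ?_ m
    rw [H.in_deg n x hx, ← hGs n]
    show chi ((Gs n).res) (θ x) = _
    rw [PSG.res, chi_finsetSum]
  set Elayer : (Σ n : H.N, (Gs n).E) ⊕ H.E → ℕ :=
    Sum.elim (fun _ => x₁) (fun e => H.layer e) with hElayer
  set Esrc : (Σ n : H.N, (Gs n).E) ⊕ H.E → Σ n : H.N, (Gs n).N :=
    Sum.elim (fun p => ⟨p.1, (Gs p.1).src p.2⟩)
      (fun e => ⟨H.src e, G1 (H.src e) (H.layer e) ⟨e, rfl, rfl⟩⟩) with hEsrc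
  set Etgt : (Σ n : H.N, (Gs n).E) ⊕ H.E → Σ n : H.N, (Gs n).N :=
    Sum.elim (fun p => ⟨p.1, (Gs p.1).tgt p.2⟩)
      (fun e => ⟨H.tgt e, G2 (H.tgt e) (H.layer e) ⟨e, rfl, rfl⟩⟩) with hEtgt
  refine ⟨{
    N := Σ n : H.N, (Gs n).N
    fintypeN := inferInstance
    nonemptyN := ⟨⟨Classical.arbitrary H.N, Classical.arbitrary _⟩⟩
    E := (Σ n : H.N, (Gs n).E) ⊕ H.E
    fintypeE := inferInstance
    layer := Elayer
    src := Esrc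
    tgt := Etgt
    label := fun p => (Gs p.1).label p.2
    label_mem := fun p => (Gs p.1).label_mem p.2
    layer_mem := ?_
    out_deg := ?_
    in_deg := ?_
    conn := ?_ }, ?_⟩
  · rintro (⟨n, e⟩ | e)
    · simpa [hElayer] using hx₁η
    · simpa [hElayer] using (domS_theta_subset hx₁ _ (H.layer_mem e)).1
  · -- out_deg
    rintro ⟨n, m⟩ x hx
    by_cases hxx : x = x₁
    · subst hxx
      rw [← (Gs n).out_deg m x hx₁s]
      refine (natCard_subtype_eq _ _ (fun e => (Sum.inl ⟨n, e⟩ :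
        (Σ n : H.N, (Gs n).E) ⊕ H.E)) ?_ ?_ ?_).symm
      · rintro e ⟨hl, hsr⟩
        refine ⟨by simp [hElayer], ?_⟩
        simp only [hEsrc, Sum.elim_inl]
        rw [hsr]
      · intro a a' _ _ h
        exact eq_of_heq (Sigma.mk.inj_iff.mp (Sum.inl.inj h)).2
      · rintro (⟨n', e⟩ | e) ⟨hl, hsr⟩
        · simp only [hEsrc, Sum.elim_inl] at hsr
          have hfst : n' = n := congrArg Sigma.fst hsr
          subst hfst
          have hsnd : (Gs n').src e = m := eq_of_heq (Sigma.mk.inj_iff.mp hsr).2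
          exact ⟨e, ⟨hKlayer n' e, hsnd⟩, rfl⟩
        · exfalso
          simp only [hElayer, Sum.elim_inr] at hl
          exact hx₁θ (hl ▸ H.layer_mem e)
    · have hxθ : x ∈ domS θ := domS_eta_cases hx hxx
      rw [show chi ((Gs n).label m) (FTerm.var x : FTerm Sig ar) = (Gs n).label m x from
        chi_var _ _, ← hG1 n x hxθ m]
      refine (natCard_subtype_eq _ _ (fun a => (Sum.inr a.1 :
        (Σ n : H.N, (Gs n).E) ⊕ H.E)) ?_ ?_ ?_).symm
      · rintro ⟨e, hl, hs⟩ hm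
        subst hl; subst hs
        refine ⟨by simp [hElayer], ?_⟩
        simp only [hEsrc, Sum.elim_inr]
        exact congrArg (fun z => (⟨H.src e, z⟩ : Σ n : H.N, (Gs n).N)) hm
      · intro a a' _ _ h
        exact Subtype.ext (Sum.inr.inj h)
      · rintro (⟨n', e⟩ | e) ⟨hl, hsr⟩
        · exfalso
          simp only [hElayer, Sum.elim_inl] at hl
          exact hxx hl.symm
        · simp only [hElayer, Sum.elim_inr] at hl
          simp only [hEsrc, Sum.elim_inr] at hsr
          subst hl
          have hfst : H.src e = n := congrArg Sigma.fst hsr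
          subst hfst
          have hsnd : G1 (H.src e) (H.layer e) ⟨e, rfl, rfl⟩ = m :=
            eq_of_heq (Sigma.mk.inj_iff.mp hsr).2
          exact ⟨⟨e, rfl, rfl⟩, hsnd, rfl⟩
  · -- in_deg
    rintro ⟨n, m⟩ x hx
    by_cases hxx : x = x₁
    · subst hxx
      have hid := (Gs n).in_deg m x hx₁s
      rw [show sbind x t₁ x = t₁ from if_pos rfl] at hid
      rw [show η x = t₁ from if_pos rfl, ← hid]
      refine (natCard_subtype_eq _ _ (fun e => (Sum.inl ⟨n, e⟩ :
        (Σ n : H.N, (Gs n).E) ⊕ H.E)) ?_ ?_ ?_).symm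
      · rintro e ⟨hl, htg⟩
        refine ⟨by simp [hElayer], ?_⟩
        simp only [hEtgt, Sum.elim_inl]
        rw [htg]
      · intro a a' _ _ h
        exact eq_of_heq (Sigma.mk.inj_iff.mp (Sum.inl.inj h)).2
      · rintro (⟨n', e⟩ | e) ⟨hl, htg⟩
        · simp only [hEtgt, Sum.elim_inl] at htg
          have hfst : n' = n := congrArg Sigma.fst htg
          subst hfst
          have hsnd : (Gs n').tgt e = m := eq_of_heq (Sigma.mk.inj_iff.mp htg).2
          exact ⟨e, ⟨hKlayer n' e, hsnd⟩, rfl⟩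
        · exfalso
          simp only [hElayer, Sum.elim_inr] at hl
          exact hx₁θ (hl ▸ H.layer_mem e)
    · have hxθ : x ∈ domS θ := domS_eta_cases hx hxx
      rw [show η x = θ x from if_neg hxx, ← hG2 n x hxθ m]
      refine (natCard_subtype_eq _ _ (fun a => (Sum.inr a.1 :
        (Σ n : H.N, (Gs n).E) ⊕ H.E)) ?_ ?_ ?_).symm
      · rintro ⟨e, hl, hs⟩ hm
        subst hl; subst hs
        refine ⟨by simp [hElayer], ?_⟩
        simp only [hEtgt, Sum.elim_inr]
        exact congrArg (fun z => (⟨H.tgt e, z⟩ : Σ n : H.N, (Gs n).N)) hm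
      · intro a a' _ _ h
        exact Subtype.ext (Sum.inr.inj h)
      · rintro (⟨n', e⟩ | e) ⟨hl, htg⟩
        · exfalso
          simp only [hElayer, Sum.elim_inl] at hl
          exact hxx hl.symm
        · simp only [hElayer, Sum.elim_inr] at hl
          simp only [hEtgt, Sum.elim_inr] at htg
          subst hl
          have hfst : H.tgt e = n := congrArg Sigma.fst htg
          subst hfst
          have hsnd : G2 (H.tgt e) (H.layer e) ⟨e, rfl, rfl⟩ = m :=
            eq_of_heq (Sigma.mk.inj_iff.mp htg).2
          exact ⟨⟨e, rfl, rfl⟩, hsnd, rfl⟩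
  · -- conn
    have compconn : ∀ (n : H.N) (m m' : (Gs n).N), Relation.ReflTransGen
        (fun p q : Σ n : H.N, (Gs n).N => ∃ e' : (Σ n : H.N, (Gs n).E) ⊕ H.E,
          (Esrc e' = p ∧ Etgt e' = q) ∨ (Esrc e' = q ∧ Etgt e' = p))
        ⟨n, m⟩ ⟨n, m'⟩ := by
      intro n m m'
      refine Relation.ReflTransGen.lift (fun m => (⟨n, m⟩ : Σ n : H.N, (Gs n).N)) ?_
        _ _ ((Gs n).conn m m')
      rintro a b ⟨e, ⟨h1, h2⟩ | ⟨h1, h2⟩⟩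
      · refine ⟨Sum.inl ⟨n, e⟩, Or.inl ⟨?_, ?_⟩⟩
        · simp only [hEsrc, Sum.elim_inl]; rw [h1]
        · simp only [hEtgt, Sum.elim_inl]; rw [h2]
      · refine ⟨Sum.inl ⟨n, e⟩, Or.inr ⟨?_, ?_⟩⟩
        · simp only [hEsrc, Sum.elim_inl]; rw [h1]
        · simp only [hEtgt, Sum.elim_inl]; rw [h2]
    have main : ∀ a b : H.N, Relation.ReflTransGen
        (fun a b => ∃ e : H.E, (H.src e = a ∧ H.tgt e = b) ∨ (H.src e = b ∧ H.tgt e = a)) a b →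
        ∀ (m : (Gs a).N) (m' : (Gs b).N), Relation.ReflTransGen
        (fun p q : Σ n : H.N, (Gs n).N => ∃ e' : (Σ n : H.N, (Gs n).E) ⊕ H.E,
          (Esrc e' = p ∧ Etgt e' = q) ∨ (Esrc e' = q ∧ Etgt e' = p))
        ⟨a, m⟩ ⟨b, m'⟩ := by
      intro a b h
      induction h with
      | refl => intro m m'; exact compconn a m m'
      | @tail b' b hab' step ih =>
          intro m m'
          obtain ⟨e, ⟨h1, h2⟩ | ⟨h1, h2⟩⟩ := step
          · subst h1; subst h2
            refine (ih m (G1 (H.src e) (H.layer e) ⟨e, rfl, rfl⟩)).trans ?_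
            refine Relation.ReflTransGen.head
              (b := ⟨H.tgt e, G2 (H.tgt e) (H.layer e) ⟨e, rfl, rfl⟩⟩)
              ⟨Sum.inr e, Or.inl ⟨?_, ?_⟩⟩ ?_
            · simp only [hEsrc, Sum.elim_inr]
            · simp only [hEtgt, Sum.elim_inr]
            · exact compconn _ _ m'
          · subst h1; subst h2
            refine (ih m (G2 (H.tgt e) (H.layer e) ⟨e, rfl, rfl⟩)).trans ?_
            refine Relation.ReflTransGen.head
              (b := ⟨H.src e, G1 (H.src e) (H.layer e) ⟨e, rfl, rfl⟩⟩)
              ⟨Sum.inr e, Or.inr ⟨?_, ?_⟩⟩ ?_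
            · simp only [hEsrc, Sum.elim_inr]
            · simp only [hEtgt, Sum.elim_inr]
            · exact compconn _ _ m'
    rintro ⟨n, m⟩ ⟨n', m'⟩
    exact main n n' (H.conn n n') m m'
  · -- res
    show (∑ p : Σ n : H.N, (Gs n).N, (Gs p.1).label p.2) = H.res
    rw [← Finset.univ_sigma_univ, Finset.sum_sigma, PSG.res]
    exact Finset.sum_congr rfl (fun n _ => hGs n)
end Dir1

/-- Lemma 1 of the paper: parallel abstract unification with the
whole idempotent substitution `{x₁/t₁} ∪ θ` coincides with parallel abstract
unification with the first binding `{x₁/t₁}` followed by parallel abstract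
unification with the remaining bindings `θ`. -/
theorem mguP_split_first_binding (Sig : Type) (ar : Sig → ℕ)
    (S : Set (ℕ →₀ ℕ)) (x₁ : ℕ) (t₁ : FTerm Sig ar) (θ : ℕ → FTerm Sig ar)
    (ht₁ : t₁ ≠ FTerm.var x₁)
    (hx₁ : θ x₁ = FTerm.var x₁)
    (hfin : (domS (fun v => if v = x₁ then t₁ else θ v)).Finite)
    (hidem : Idem (fun v => if v = x₁ then t₁ else θ v)) :
    mguP S (fun v => if v = x₁ then t₁ else θ v)
      = mguP (mguP S (sbind x₁ t₁)) θ :=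
  Set.Subset.antisymm (dir1 S ht₁ hx₁) (dir2 S ht₁ hx₁)
end

section
/- Let 𝒢 = {G^i}_{i∈[1,p]} be a parallel sharing graph for a set S of ω-sharing groups and the idempotent substitution {x₁/t₁, …, x_p/t_p}, and let G¹₁, …, G¹_k be the connected components of the layer G¹. Then each component G¹_j, equipped with the restriction of the labeling l_𝒢 to its nodes, is a single-layer parallel sharing graph for S and the single-binding substitution {x₁/t₁}; in particular res(G¹_j) ∈ mgu_p(S,{x₁/t₁}) for every j ∈ [1,k], and ⊎_{j=1}^{k} res(G¹_j) = res(𝒢). -/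
open Classical

variable {Sig : Type} {ar : Sig → ℕ}

/-- Connectivity relation induced by the edges of the layer `x₁` of a parallel
sharing graph: two nodes are related iff they are joined by a (possibly empty)
path of layer-`x₁` edges, traversed in either direction.  Its equivalence
classes are the connected components of the layer `G¹`. -/
def layerConn {S : Set (ℕ →₀ ℕ)} {θ : ℕ → FTerm Sig ar}
    (G : PSG Sig ar S θ) (x₁ : ℕ) : G.N → G.N → Prop :=
  Relation.ReflTransGen
    (fun a b => ∃ e : G.E, G.layer e = x₁ ∧
      ((G.src e = a ∧ G.tgt e = b) ∨ (G.src e = b ∧ G.tgt e = a)))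

/-- The resultant ω-sharing group of the connected component (in the layer `x₁`)
of the node `n`: the sum of the labels of all nodes connected to `n` by
layer-`x₁` edges. -/
noncomputable def compRes {S : Set (ℕ →₀ ℕ)} {θ : ℕ → FTerm Sig ar}
    (G : PSG Sig ar S θ) (x₁ : ℕ) (n : G.N) : ℕ →₀ ℕ :=
  ∑ m : G.N, Set.indicator {m' | layerConn G x₁ n m'} G.label m

section Aux

variable {S : Set (ℕ →₀ ℕ)} {θ : ℕ → FTerm Sig ar}

lemma layerConn_symm (G : PSG Sig ar S θ) (x₁ : ℕ) {a b : G.N}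
    (h : layerConn G x₁ a b) : layerConn G x₁ b a := by
  have hsym : Symmetric (fun a b => ∃ e : G.E, G.layer e = x₁ ∧
      ((G.src e = a ∧ G.tgt e = b) ∨ (G.src e = b ∧ G.tgt e = a))) := by
    rintro a b ⟨e, h1, h2⟩
    exact ⟨e, h1, h2.symm⟩
  exact @Std.Symm.symm _ _ (@Relation.ReflTransGen.stdSymm _ _ ⟨fun _ _ h => hsym h⟩) _ _ h

lemma domS_sbind_s2 (x₁ : ℕ) (hx₁ : x₁ ∈ domS θ) :
    domS (sbind x₁ (θ x₁)) = {x₁} := by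
  ext v
  simp only [domS, sbind, Set.mem_setOf_eq, Set.mem_singleton_iff]
  by_cases hv : v = x₁
  · subst hv; simpa [domS] using hx₁
  · simp [hv]

lemma compRes_mem (G : PSG Sig ar S θ) (x₁ : ℕ) (hx₁ : x₁ ∈ domS θ) (n : G.N) :
    compRes G x₁ n ∈ mguP S (sbind x₁ (θ x₁)) := by
  classical
  have hdom := domS_sbind_s2 (θ := θ) x₁ hx₁
  -- nodes and edges of the component
  set N' := {m : G.N // layerConn G x₁ n m} with hN'
  set E' := {e : G.E // G.layer e = x₁ ∧ layerConn G x₁ n (G.src e)} with hE'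
  have htgt : ∀ e : E', layerConn G x₁ n (G.tgt e.1) := by
    rintro ⟨e, hl, hs⟩
    exact hs.tail ⟨e, hl, Or.inl ⟨rfl, rfl⟩⟩
  have hx₁mem : x₁ ∈ domS (sbind x₁ (θ x₁)) := by rw [hdom]; rfl
  -- the single-layer graph
  refine ⟨{ N := N'
            fintypeN := Fintype.ofFinite _
            nonemptyN := ⟨⟨n, Relation.ReflTransGen.refl⟩⟩
            E := E'
            fintypeE := Fintype.ofFinite _
            layer := fun _ => x₁
            src := fun e => ⟨G.src e.1, e.2.2⟩
            tgt := fun e => ⟨G.tgt e.1, htgt e⟩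
            label := fun m => G.label m.1
            label_mem := fun m => G.label_mem m.1
            layer_mem := fun _ => hx₁mem
            out_deg := ?_
            in_deg := ?_
            conn := ?_ }, ?_⟩
  · -- out_deg
    intro m x hx
    rw [hdom, Set.mem_singleton_iff] at hx
    subst x
    have hcard : Nat.card {e : E' // x₁ = x₁ ∧ (⟨G.src e.1, e.2.2⟩ : N') = m}
        = Nat.card {e : G.E // G.layer e = x₁ ∧ G.src e = m.1} := by
      refine Nat.card_congr ⟨fun e => ⟨e.1.1, e.1.2.1, congrArg Subtype.val e.2.2⟩,
        fun e => ⟨⟨e.1, e.2.1, by rw [e.2.2]; exact m.2⟩, rfl, Subtype.ext e.2.2⟩,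
        fun e => by ext; rfl, fun e => by ext; rfl⟩
    exact hcard.trans (G.out_deg m.1 x₁ hx₁)
  · -- in_deg
    intro m x hx
    rw [hdom, Set.mem_singleton_iff] at hx
    subst x
    have hval : sbind x₁ (θ x₁) x₁ = θ x₁ := by simp [sbind]
    rw [hval]
    have hcard : Nat.card {e : E' // x₁ = x₁ ∧ (⟨G.tgt e.1, htgt e⟩ : N') = m}
        = Nat.card {e : G.E // G.layer e = x₁ ∧ G.tgt e = m.1} := by
      refine Nat.card_congr ⟨fun e => ⟨e.1.1, e.1.2.1, congrArg Subtype.val e.2.2⟩,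
        fun e => ⟨⟨e.1, e.2.1,
          (m.2.tail ⟨e.1, e.2.1, Or.inr ⟨rfl, e.2.2⟩⟩ : layerConn G x₁ n (G.src e.1))⟩,
          rfl, Subtype.ext e.2.2⟩,
        fun e => by ext; rfl, fun e => by ext; rfl⟩
    exact hcard.trans (G.in_deg m.1 x₁ hx₁)
  · -- conn
    set rel' : N' → N' → Prop := fun a b => ∃ e : E',
      ((⟨G.src e.1, e.2.2⟩ : N') = a ∧ (⟨G.tgt e.1, htgt e⟩ : N') = b) ∨
      ((⟨G.src e.1, e.2.2⟩ : N') = b ∧ (⟨G.tgt e.1, htgt e⟩ : N') = a) with hrel'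
    have hsym' : Symmetric rel' := by
      rintro a b ⟨e, h⟩; exact ⟨e, h.symm⟩
    have key : ∀ m (hm : layerConn G x₁ n m),
        Relation.ReflTransGen rel' ⟨n, Relation.ReflTransGen.refl⟩ ⟨m, hm⟩ := by
      intro m hm
      induction hm with
      | refl => exact Relation.ReflTransGen.refl
      | @tail b c hpath hstep ih =>
        obtain ⟨e, hl, hor⟩ := hstep
        rcases hor with ⟨hsb, htc⟩ | ⟨hsc, htb⟩
        · have he : (⟨e, hl, by rw [hsb]; exact hpath⟩ : E') ∈ Set.univ := trivial
          refine ih.tail ⟨⟨e, hl, by rw [hsb]; exact hpath⟩,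
            Or.inl ⟨Subtype.ext hsb, Subtype.ext htc⟩⟩
        · refine ih.tail ⟨⟨e, hl, by rw [hsc]; exact hpath.tail ⟨e, hl, Or.inr ⟨hsc, htb⟩⟩⟩,
            Or.inr ⟨Subtype.ext hsc, Subtype.ext htb⟩⟩
    intro a b
    exact (@Std.Symm.symm _ _ (@Relation.ReflTransGen.stdSymm _ _ ⟨fun _ _ h => hsym' h⟩) _ _ (key a.1 a.2)).trans (key b.1 b.2)
  · -- res = compRes
    simp only [PSG.res]
    rw [compRes]
    rw [Finset.sum_indicator_eq_sum_filter]
    exact (Finset.sum_subtype _ (fun x => by simp [Set.mem_setOf_eq]) _).symm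

end Aux

/-- let `𝒢` be a parallel sharing graph for `S` and the
idempotent substitution `θ = {x₁/t₁, …, x_p/t_p}`.  Every connected component
of the layer `G¹` (the layer of the binding `x₁/t₁`), with the restricted
labeling, is a single-layer parallel sharing graph for `S` and `{x₁/t₁}`; in
particular the resultant sharing group of each component belongs to
`mgu_p(S,{x₁/t₁})`, and the multiset sum of the resultants of all the
components (enumerated by any set `R` of representatives, one per component)
equals `res(𝒢)`. -/
theorem components_of_first_layer (Sig : Type) (ar : Sig → ℕ)
    (S : Set (ℕ →₀ ℕ)) (θ : ℕ → FTerm Sig ar)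
    (hfin : (domS θ).Finite) (hidem : Idem θ)
    (x₁ : ℕ) (hx₁ : x₁ ∈ domS θ)
    (G : PSG Sig ar S θ) :
    (∀ n : G.N, compRes G x₁ n ∈ mguP S (sbind x₁ (θ x₁))) ∧
    (∀ R : Finset G.N, (∀ n : G.N, ∃! m : G.N, m ∈ R ∧ layerConn G x₁ m n) →
      ∑ m ∈ R, compRes G x₁ m = G.res) := by
  constructor
  · intro n
    exact compRes_mem G x₁ hx₁ n
  · intro R hR
    classical
    simp only [compRes, PSG.res]
    rw [Finset.sum_comm]
    refine Finset.sum_congr rfl ?_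
    intro k _
    obtain ⟨m₀, ⟨hm₀R, hm₀c⟩, huniq⟩ := hR k
    rw [Finset.sum_eq_single_of_mem m₀ hm₀R]
    · exact Set.indicator_of_mem hm₀c _
    · intro m hmR hne
      refine Set.indicator_of_notMem (fun hc => hne ?_) _
      exact huniq m ⟨hmR, hc⟩
end
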